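/- For all real p > 0 and q > 0, the maximum of t^p (1−t)^q over t ∈ [0,1] is at most (p/(e·q))^p. -/

import Mathlib

/-- For `p, q > 0`, the maximum of `t^p (1-t)^q` over `[0,1]` is at most `(p/(e q))^p`. -/
theorem max_rpow_mul_rpow_le (p q : ℝ) (hp : 0 < p) (hq : 0 < q) :
    ∀ t ∈ Set.Icc (0 : ℝ) 1,
      t ^ p * (1 - t) ^ q ≤ (p / (Real.exp 1 * q)) ^ p := by
  rintro t ⟨ht0, ht1⟩
  have h1t : (0:ℝ) ≤ 1 - t := by linarith
  set s := t * q / p with hs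
  have hs0 : 0 ≤ s := by positivity
  have key : s * Real.exp (-s) ≤ Real.exp (-1) := by
    have h := Real.add_one_le_exp (s - 1)
    have hle : s ≤ Real.exp (s - 1) := by linarith
    calc s * Real.exp (-s) ≤ Real.exp (s - 1) * Real.exp (-s) :=
          mul_le_mul_of_nonneg_right hle (Real.exp_pos _).le
      _ = Real.exp (-1) := by rw [← Real.exp_add]; ring_nf
  have base : t * Real.exp (-s) ≤ p / (Real.exp 1 * q) := by
    have heq : t * Real.exp (-s) = (p / q) * (s * Real.exp (-s)) := by
      field_simp [hs]; rw [hs, div_mul_cancel₀ _ hp.ne']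
    rw [heq]
    have h2 : (p / q) * (s * Real.exp (-s)) ≤ (p / q) * Real.exp (-1) :=
      mul_le_mul_of_nonneg_left key (by positivity)
    refine h2.trans_eq ?_
    rw [Real.exp_neg]
    field_simp
  have step1 : (1 - t) ^ q ≤ Real.exp (-t) ^ q := by
    apply Real.rpow_le_rpow h1t _ hq.le
    have := Real.add_one_le_exp (-t)
    linarith
  have hexp : Real.exp (-t) ^ q = Real.exp (-s) ^ p := by
    rw [← Real.exp_mul, ← Real.exp_mul]
    congr 1
    field_simp [hs]
    rw [hs, div_mul_cancel₀ _ hp.ne']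
  calc t ^ p * (1 - t) ^ q ≤ t ^ p * Real.exp (-t) ^ q :=
        mul_le_mul_of_nonneg_left step1 (Real.rpow_nonneg ht0 p)
    _ = (t * Real.exp (-s)) ^ p := by
        rw [hexp, ← Real.mul_rpow ht0 (Real.exp_pos _).le]
    _ ≤ (p / (Real.exp 1 * q)) ^ p := Real.rpow_le_rpow (by positivity) base hp.le
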